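/- Let $Q : \mathbb{R}^n \to \mathbb{R}^n$ be an invertible affine map $Q(\lambda) = M\lambda + b$ with $M$ invertible, and let the prior be the uniform density on a set $\Lambda \subset \mathbb{R}^n$ of positive finite Lebesgue measure. Then the push-forward density of the prior under $Q$ is uniform (constant equal to $1/(|\det M| \cdot |\Lambda|)$) on $Q(\Lambda)$. Consequently, for any observed density $\pi^{obs}$ supported in $Q(\Lambda)$, the consistent Bayesian posterior $\pi^{post}(\lambda) \propto \pi^{prior}(\lambda)\, \pi^{obs}(Q(\lambda))/\pi^{Q(prior)}(Q(\lambda))$ coincides with the statistical Bayesian posterior $\tilde{\pi}^{post}(\lambda) \propto \pi^{prior}(\lambda)\, \pi^{obs}(Q(\lambda))$. -/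

import Mathlib

open MeasureTheory ENNReal Matrix

/-- For an invertible affine map and a uniform prior on a set `s` of positive finite measure,
the push-forward density of the prior is the uniform (constant) density on `Q '' s`;
consequently the consistent Bayesian posterior coincides with the statistical Bayesian
posterior `∝ πprior · (πobs ∘ Q)`. -/
theorem affine_uniform_pushforward_and_posterior_coincidence
    (n : ℕ) (M : Matrix (Fin n) (Fin n) ℝ) (hM : M.det ≠ 0) (b : Fin n → ℝ)
    (Q : (Fin n → ℝ) → (Fin n → ℝ)) (hQ : Q = fun x => M.mulVec x + b)
    (s : Set (Fin n → ℝ)) (hs : MeasurableSet s)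
    (hs0 : 0 < volume s) (hsfin : volume s < ⊤)
    (πprior : (Fin n → ℝ) → ℝ≥0∞)
    (hπprior : πprior = s.indicator fun _ => (volume s)⁻¹)
    (πQ : (Fin n → ℝ) → ℝ≥0∞)
    (hπQ : πQ = (Q '' s).indicator fun _ => (ENNReal.ofReal |M.det| * volume s)⁻¹)
    (πobs : (Fin n → ℝ) → ℝ≥0∞) (hπobs : Measurable πobs)
    (hobs1 : ∫⁻ q, πobs q = 1)
    (hsupp : ∀ q ∉ Q '' s, πobs q = 0) :
    (Measure.map Q (volume.withDensity πprior) = volume.withDensity πQ) ∧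
    (∀ l, πprior l * (πobs (Q l) / πQ (Q l))
        = πprior l * πobs (Q l) / ∫⁻ x, πprior x * πobs (Q x)) := by
  classical
  set c : ℝ≥0∞ := ENNReal.ofReal |M.det| with hc
  have hdetpos : 0 < |M.det| := abs_pos.mpr hM
  have hc0 : c ≠ 0 := by
    simpa [hc] using (ENNReal.ofReal_pos.mpr hdetpos).ne'
  have hcT : c ≠ ⊤ := ENNReal.ofReal_ne_top
  -- inverse map
  set g : (Fin n → ℝ) → (Fin n → ℝ) := fun y => M⁻¹.mulVec (y - b) with hg
  have hgQ : ∀ x, g (Q x) = x := by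
    intro x
    simp only [hg, hQ, add_sub_cancel_right, Matrix.mulVec_mulVec,
      Matrix.nonsing_inv_mul M (isUnit_iff_ne_zero.mpr hM), Matrix.one_mulVec]
  have hQg : ∀ y, Q (g y) = y := by
    intro y
    simp only [hg, hQ, Matrix.mulVec_mulVec, Matrix.mul_nonsing_inv M (isUnit_iff_ne_zero.mpr hM),
      Matrix.one_mulVec, sub_add_cancel]
  have hQinj : Function.Injective Q := Function.LeftInverse.injective hgQ
  have hmulVecMeas : ∀ (A : Matrix (Fin n) (Fin n) ℝ), Measurable A.mulVec := by
    intro A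
    have h1 : Measurable (Matrix.toLin' A) := (LinearMap.continuous_on_pi _).measurable
    have h2 : A.mulVec = ⇑(Matrix.toLin' A) := funext fun v => (Matrix.toLin'_apply A v).symm
    rw [h2]; exact h1
  have hQmeas : Measurable Q := by
    rw [hQ]; exact (hmulVecMeas M).add_const b
  have hgmeas : Measurable g := by
    rw [hg]; exact (hmulVecMeas M⁻¹).comp (measurable_id.sub_const b)
  have hQimg : Q '' s = g ⁻¹' s := by
    ext y
    constructor
    · rintro ⟨x, hx, rfl⟩; simpa [hgQ x] using hx
    · intro hy; exact ⟨g y, hy, hQg y⟩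
  have hQsMeas : MeasurableSet (Q '' s) := by
    rw [hQimg]; exact hgmeas hs
  -- pushforward of Lebesgue measure
  have hmapvol : Measure.map Q volume = c⁻¹ • volume := by
    have hlin : Measure.map (Matrix.toLin' M) volume
        = ENNReal.ofReal |M.det⁻¹| • volume :=
      Real.map_matrix_volume_pi_eq_smul_volume_pi hM
    have hcomp : Q = (fun y => y + b) ∘ (Matrix.toLin' M) := by
      funext x; simp [hQ, Matrix.toLin'_apply]
    rw [hcomp, ← Measure.map_map (measurable_add_const b)
      (LinearMap.continuous_on_pi _).measurable, hlin, Measure.map_smul,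
      map_add_right_eq_self volume b, hc, abs_inv, ENNReal.ofReal_inv_of_pos hdetpos]
  have hcinv : (c * volume s)⁻¹ = (volume s)⁻¹ * c⁻¹ := by
    rw [ENNReal.mul_inv (Or.inl hc0) (Or.inl hcT), mul_comm]
  have hpre : Q ⁻¹' (Q '' s) = s := Set.preimage_image_eq s hQinj
  have hmemQ : ∀ l, Q l ∈ Q '' s ↔ l ∈ s := by
    intro l
    constructor
    · rintro ⟨x, hx, hxe⟩; rwa [← hQinj hxe]
    · intro h; exact ⟨l, h, rfl⟩
  have part1 : Measure.map Q (volume.withDensity πprior) = volume.withDensity πQ := by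
    rw [hπprior, hπQ, withDensity_indicator hs, withDensity_indicator hQsMeas,
      withDensity_const, withDensity_const, Measure.map_smul]
    have : Measure.map Q (volume.restrict s) = c⁻¹ • volume.restrict (Q '' s) := by
      have h3 := Measure.restrict_map hQmeas hQsMeas (μ := volume)
      rw [hpre] at h3
      rw [← h3, hmapvol, Measure.restrict_smul]
    rw [this, smul_smul, hcinv]
  have hI : ∫⁻ x, πprior x * πobs (Q x) = (c * volume s)⁻¹ := by
    have h1 : ∀ x, πprior x * πobs (Q x)
        = s.indicator (fun x => (volume s)⁻¹ * πobs (Q x)) x := by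
      intro x
      by_cases hx : x ∈ s <;>
        simp [hπprior, Set.indicator_of_mem, Set.indicator_of_notMem, hx]
    calc ∫⁻ x, πprior x * πobs (Q x)
        = ∫⁻ x in s, (volume s)⁻¹ * πobs (Q x) := by
          simp_rw [h1]; exact lintegral_indicator hs _
      _ = (volume s)⁻¹ * ∫⁻ x in s, πobs (Q x) :=
          lintegral_const_mul _ (hπobs.comp hQmeas)
      _ = (volume s)⁻¹ * ∫⁻ x, πobs (Q x) := by
          congr 1
          have h2 : (fun x => πobs (Q x)) = s.indicator fun x => πobs (Q x) := by
            funext x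
            by_cases hx : x ∈ s
            · simp [hx]
            · simp [hx, hsupp (Q x) (fun h => hx ((hmemQ x).mp h))]
          conv_rhs => rw [h2]
          rw [lintegral_indicator hs _]
      _ = (volume s)⁻¹ * c⁻¹ := by
          rw [← lintegral_map hπobs hQmeas, hmapvol, lintegral_smul_measure, hobs1, smul_eq_mul, mul_one]
      _ = (c * volume s)⁻¹ := hcinv.symm
  refine ⟨part1, fun l => ?_⟩
  rw [hI]
  by_cases hl : l ∈ s
  · rw [hπQ, Set.indicator_of_mem ((hmemQ l).mpr hl), mul_div_assoc]
  · simp [hπprior, Set.indicator_of_notMem, hl]
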